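/- arXiv:2103.13075 — 2 statements merged into one kernel-verified Lean document; each statement's English description precedes it below -/
import Mathlib

section
/- Let q < 0, Q a star body in ℝⁿ with origin in its interior, and K_i convex bodies with origin in their interiors for i = 1, 2, …. If the sequence of dual mixed volumes Ṽ_q(K_i, Q) is bounded from above, then there exists M > 1 depending only on Q such that the polar bodies satisfy K_i* ⊆ MB for all i. -/
open MeasureTheory Metric Set Filter Pointwise
open scoped Classical NNReal ENNReal

noncomputable section

abbrev Euc (n : ℕ) := EuclideanSpace ℝ (Fin n)

/-- Support function of a set. -/
def supportFn {n : ℕ} (K : Set (Euc n)) (u : Euc n) : ℝ :=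
  sSup ((fun x => (inner ℝ u x : ℝ)) '' K)

/-- Radial function of a set (w.r.t. the origin). -/
def radialFn {n : ℕ} (K : Set (Euc n)) (u : Euc n) : ℝ :=
  sSup {r : ℝ | 0 ≤ r ∧ r • u ∈ K}

/-- A convex body containing the origin in its interior. -/
def IsConvexBody {n : ℕ} (K : Set (Euc n)) : Prop :=
  IsCompact K ∧ Convex ℝ K ∧ 0 ∈ interior K

/-- A star body (about the origin) with origin in its interior. -/
def IsStarBody {n : ℕ} (Q : Set (Euc n)) : Prop :=
  IsCompact Q ∧ 0 ∈ interior Q ∧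
    (∀ x ∈ Q, ∀ t : ℝ, 0 ≤ t → t ≤ 1 → t • x ∈ Q) ∧
    ContinuousOn (radialFn Q) (sphere (0 : Euc n) 1)

/-- `K` and `L` are dilates of each other. -/
def Dilates {n : ℕ} (K L : Set (Euc n)) : Prop :=
  ∃ c : ℝ, 0 < c ∧ K = c • L

/-- The `L_p` Minkowski combination `s·K +_p t·L` (Wulff shape). -/
def lpComb {n : ℕ} (p s t : ℝ) (K L : Set (Euc n)) : Set (Euc n) :=
  if p = 0 then
    {x | ∀ u ∈ sphere (0 : Euc n) 1,
      (inner ℝ x u : ℝ) ≤ supportFn K u ^ s * supportFn L u ^ t}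
  else
    {x | ∀ u ∈ sphere (0 : Euc n) 1,
      (inner ℝ x u : ℝ) ≤ (s * supportFn K u ^ p + t * supportFn L u ^ p) ^ (1/p)}

/-- Radial function of the radial `p`-combination `s·K +~_p t·L`. -/
def radialCombFn {n : ℕ} (p s t : ℝ) (K L : Set (Euc n)) (u : Euc n) : ℝ :=
  if p = 0 then radialFn K u ^ s * radialFn L u ^ t
  else (s * radialFn K u ^ p + t * radialFn L u ^ p) ^ (1/p)

/-- The radial `p`-combination `s·K +~_p t·L` as a star-shaped set. -/
def radialComb {n : ℕ} (p s t : ℝ) (K L : Set (Euc n)) : Set (Euc n) :=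
  {x | ∃ u ∈ sphere (0 : Euc n) 1, ∃ r : ℝ,
    0 ≤ r ∧ r ≤ radialCombFn p s t K L u ∧ x = r • u}

/-- The spherical Lebesgue measure on `S^{n-1}`. -/
def sphμ (n : ℕ) : Measure (Euc n) := (μH[(n : ℝ) - 1]).restrict (sphere 0 1)

/-- The `q`-th dual mixed volume `~V_q(K,Q)`. -/
def dualMixedVol {n : ℕ} (q : ℝ) (K Q : Set (Euc n)) : ℝ :=
  (1 / (n : ℝ)) * ∫ u, radialFn K u ^ q * radialFn Q u ^ ((n : ℝ) - q) ∂(sphμ n)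

/-- The radial Gauss map of `K`. -/
def radialGaussMap {n : ℕ} (K : Set (Euc n)) (u : Euc n) : Euc n :=
  if h : ∃ v, v ∈ sphere (0 : Euc n) 1 ∧
      (inner ℝ (radialFn K u • u) v : ℝ) = supportFn K v then h.choose else 0

/-- The `L_p` dual mixed volume `~V_{p,q}(K,L,Q)`. -/
def lpDualMixedVol {n : ℕ} (p q : ℝ) (K L Q : Set (Euc n)) : ℝ :=
  (1 / (n : ℝ)) * ∫ u,
    (supportFn L (radialGaussMap K u) / supportFn K (radialGaussMap K u)) ^ p *
      radialFn K u ^ q * radialFn Q u ^ ((n : ℝ) - q) ∂(sphμ n)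

/-- The `L_p` dual curvature measure `~C_{p,q}(K,Q,·)` of `K` w.r.t. `Q`. -/
def lpDualCurv {n : ℕ} (p q : ℝ) (K Q : Set (Euc n)) : Measure (Euc n) :=
  ((sphμ n).withDensity fun u => ENNReal.ofReal
      ((1 / (n : ℝ)) * supportFn K (radialGaussMap K u) ^ (-p) *
        radialFn K u ^ q * radialFn Q u ^ ((n : ℝ) - q))).map (radialGaussMap K)

/-- The dual mixed entropy `~E(K,Q)`. -/
def dualEntropy {n : ℕ} (K Q : Set (Euc n)) : ℝ :=
  (1 / (n : ℝ)) * ∫ u, Real.log (radialFn K u / radialFn Q u) * radialFn Q u ^ (n : ℝ) ∂(sphμ n)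

/-- The polar body. -/
def polarBody {n : ℕ} (K : Set (Euc n)) : Set (Euc n) :=
  {x | ∀ y ∈ K, (inner ℝ x y : ℝ) ≤ 1}

/-- Volume (Lebesgue measure) as a real number. -/
def vol {n : ℕ} (K : Set (Euc n)) : ℝ := (volume K).toReal


section RadialAux
variable {n : ℕ}

lemma radialFn_nonneg (K : Set (Euc n)) (u : Euc n) : 0 ≤ radialFn K u :=
  Real.sSup_nonneg fun _ hr => hr.1

lemma bddAbove_radialSet {K : Set (Euc n)} {R : ℝ} (hKR : K ⊆ closedBall 0 R)
    {u : Euc n} (hu : u ≠ 0) : BddAbove {r : ℝ | 0 ≤ r ∧ r • u ∈ K} := by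
  refine ⟨R / ‖u‖, fun r hr => ?_⟩
  have h := hKR hr.2
  rw [mem_closedBall_zero_iff, norm_smul, Real.norm_eq_abs, abs_of_nonneg hr.1] at h
  rw [le_div_iff₀ (norm_pos_iff.mpr hu)]
  exact h

lemma radialFn_le {K : Set (Euc n)} {R : ℝ} (hR : 0 ≤ R) (hKR : K ⊆ closedBall 0 R)
    {u : Euc n} (hu : ‖u‖ = 1) : radialFn K u ≤ R := by
  refine Real.sSup_le (fun r hr => ?_) hR
  have h := hKR hr.2
  rwa [mem_closedBall_zero_iff, norm_smul, hu, mul_one, Real.norm_eq_abs,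
    abs_of_nonneg hr.1] at h

lemma le_radialFn {K : Set (Euc n)} {R : ℝ} (hKR : K ⊆ closedBall 0 R) {r : ℝ}
    (hr0 : 0 ≤ r) {u : Euc n} (hu : ‖u‖ = 1) (hmem : r • u ∈ K) : r ≤ radialFn K u :=
  le_csSup (bddAbove_radialSet hKR (by rw [← norm_pos_iff]; rw [hu]; norm_num))
    ⟨hr0, hmem⟩

lemma exists_radialFn_lower {K : Set (Euc n)} (h0 : 0 ∈ interior K) {R : ℝ}
    (hKR : K ⊆ closedBall 0 R) :
    ∃ ε : ℝ, 0 < ε ∧ ∀ u : Euc n, ‖u‖ = 1 → ε ≤ radialFn K u := by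
  obtain ⟨δ, hδ, hball⟩ := Metric.mem_nhds_iff.mp (mem_interior_iff_mem_nhds.mp h0)
  refine ⟨δ / 2, by positivity, fun u hu => ?_⟩
  refine le_radialFn hKR (by positivity) hu (hball ?_)
  rw [mem_ball_zero_iff, norm_smul, hu, mul_one, Real.norm_eq_abs,
    abs_of_nonneg (by positivity)]
  linarith

lemma radialFn_le_of_polar {K : Set (Euc n)} {x : Euc n} (hx : x ∈ polarBody K)
    {u : Euc n} {c : ℝ} (hc : 0 < c) (hinner : c ≤ (inner ℝ x u : ℝ)) :
    radialFn K u ≤ 1 / c := by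
  refine Real.sSup_le (fun r hr => ?_) (by positivity)
  have h1 : (inner ℝ x (r • u) : ℝ) ≤ 1 := hx _ hr.2
  rw [real_inner_smul_right] at h1
  rw [le_div_iff₀ hc]
  calc r * c ≤ r * (inner ℝ x u : ℝ) := by
        exact mul_le_mul_of_nonneg_left hinner hr.1
    _ ≤ 1 := h1

lemma measurable_radialFn {K : Set (Euc n)} (hcl : IsClosed K) (h0 : 0 ∈ K)
    (hstar : ∀ x ∈ K, ∀ t : ℝ, 0 ≤ t → t ≤ 1 → t • x ∈ K)
    {R : ℝ} (hKR : K ⊆ closedBall 0 R) : Measurable (radialFn K) := by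
  apply measurable_of_Ici
  intro a
  have key : ∀ u : Euc n, u ≠ 0 → (a ≤ radialFn K u ↔ max a 0 • u ∈ K) := by
    intro u hu
    have hbdd := bddAbove_radialSet hKR hu
    have hne : ({r : ℝ | 0 ≤ r ∧ r • u ∈ K}).Nonempty := ⟨0, le_refl 0, by simpa using h0⟩
    constructor
    · intro ha
      have hmem : radialFn K u • u ∈ K := by
        have hcl' : IsClosed {r : ℝ | 0 ≤ r ∧ r • u ∈ K} := by
          have : {r : ℝ | 0 ≤ r ∧ r • u ∈ K} = Ici 0 ∩ (fun r : ℝ => r • u) ⁻¹' K := by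
            ext r; simp [mem_Ici, and_comm]
          rw [this]
          exact isClosed_Ici.inter (hcl.preimage (by fun_prop))
        exact (hcl'.csSup_mem hne hbdd).2
      have hm0 : 0 ≤ radialFn K u := radialFn_nonneg K u
      rcases eq_or_lt_of_le hm0 with hm | hm
      · have : max a 0 = 0 := by
          have : a ≤ 0 := by rw [← hm] at ha; exact ha
          simp [this]
        rw [this]
        simpa using h0
      · have := hstar _ hmem (max a 0 / radialFn K u)
          (by positivity)
          (by rw [div_le_one hm]; exact max_le ha hm0)
        rwa [smul_smul, div_mul_cancel₀ _ hm.ne'] at this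
    · intro h
      have : max a 0 ≤ radialFn K u := le_csSup hbdd ⟨le_max_right _ _, h⟩
      exact le_trans (le_max_left _ _) this
  have hset : radialFn K ⁻¹' Ici a =
      ((fun u : Euc n => max a 0 • u) ⁻¹' K ∩ {(0 : Euc n)}ᶜ) ∪
        ({(0 : Euc n)} ∩ radialFn K ⁻¹' Ici a) := by
    ext u
    by_cases hu : u = 0
    · subst hu; by_cases h : a ≤ radialFn K (0 : Euc n) <;>
        simp [mem_preimage, mem_Ici, h]
    · simp only [mem_union, mem_inter_iff, mem_preimage, mem_compl_iff, mem_singleton_iff, hu,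
        not_false_iff, and_true, false_and, or_false, mem_Ici]
      exact key u hu
  rw [hset]
  exact (((hcl.preimage (by fun_prop)).measurableSet).inter
      (measurableSet_singleton 0).compl).union
    ((Set.Countable.mono Set.inter_subset_left (Set.countable_singleton 0)).measurableSet)

end RadialAux

def capSet {n : ℕ} (v : Euc n) : Set (Euc n) :=
  {u | 1/2 ≤ (inner ℝ u v : ℝ)} ∩ sphere 0 1

section HausdorffAux
variable {m : ℕ}

lemma lipschitzOnWith_normalize :
    LipschitzOnWith 2 (fun x : Euc (m+1) => ‖x‖⁻¹ • x) {x | 1 ≤ ‖x‖} := by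
  rw [lipschitzOnWith_iff_dist_le_mul]
  intro x hx y hy
  simp only [mem_setOf_eq] at hx hy
  have hx0 : (0:ℝ) < ‖x‖ := lt_of_lt_of_le one_pos hx
  have hy0 : (0:ℝ) < ‖y‖ := lt_of_lt_of_le one_pos hy
  rw [dist_eq_norm, dist_eq_norm]
  push_cast
  have hsplit : ‖x‖⁻¹ • x - ‖y‖⁻¹ • y = (‖x‖⁻¹ • (x - y)) + ((‖x‖⁻¹ - ‖y‖⁻¹) • y) := by
    rw [smul_sub, sub_smul]; abel
  rw [hsplit]
  have key : ‖x‖⁻¹ - ‖y‖⁻¹ = (‖y‖ - ‖x‖) * (‖x‖⁻¹ * ‖y‖⁻¹) := by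
    field_simp
  have h2 : |‖x‖⁻¹ - ‖y‖⁻¹| * ‖y‖ = |‖y‖ - ‖x‖| * ‖x‖⁻¹ := by
    rw [key, abs_mul, abs_of_nonneg (by positivity : (0:ℝ) ≤ ‖x‖⁻¹ * ‖y‖⁻¹)]
    rw [mul_assoc, mul_assoc, inv_mul_cancel₀ hy0.ne', mul_one]
  have h3 : |‖y‖ - ‖x‖| ≤ ‖x - y‖ := by
    rw [abs_sub_comm]
    simpa [dist_eq_norm] using abs_norm_sub_norm_le x y
  have h4 : ‖x‖⁻¹ ≤ 1 := by
    rw [inv_le_one_iff₀]; right; exact hx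
  calc ‖(‖x‖⁻¹ • (x - y)) + ((‖x‖⁻¹ - ‖y‖⁻¹) • y)‖
      ≤ ‖‖x‖⁻¹ • (x - y)‖ + ‖(‖x‖⁻¹ - ‖y‖⁻¹) • y‖ := norm_add_le _ _
    _ = ‖x‖⁻¹ * ‖x - y‖ + |‖x‖⁻¹ - ‖y‖⁻¹| * ‖y‖ := by
        rw [norm_smul, norm_smul, Real.norm_eq_abs, Real.norm_eq_abs,
          abs_of_nonneg (by positivity : (0:ℝ) ≤ ‖x‖⁻¹)]
    _ = ‖x‖⁻¹ * ‖x - y‖ + |‖y‖ - ‖x‖| * ‖x‖⁻¹ := by rw [h2]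
    _ ≤ 1 * ‖x - y‖ + ‖x - y‖ * 1 := by
        refine add_le_add (mul_le_mul_of_nonneg_right h4 (norm_nonneg _)) ?_
        exact mul_le_mul h3 h4 (by positivity) (norm_nonneg _)
    _ = 2 * ‖x - y‖ := by ring

lemma isometry_insertNth (i : Fin (m+1)) (s : ℝ) :
    Isometry (fun y : Fin m → ℝ => (i.insertNth s y : Fin (m+1) → ℝ)) := by
  apply Isometry.of_dist_eq
  intro y z
  apply le_antisymm
  · rw [dist_pi_le_iff dist_nonneg]
    intro k
    by_cases hk : k = i
    · subst hk
      simp only [Fin.insertNth_apply_same, dist_self]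
      exact dist_nonneg
    · obtain ⟨j, rfl⟩ := Fin.exists_succAbove_eq hk
      simp only [Fin.insertNth_apply_succAbove]
      exact dist_le_pi_dist y z j
  · rw [dist_pi_le_iff dist_nonneg]
    intro j
    have := dist_le_pi_dist (i.insertNth s y : Fin (m+1) → ℝ) (i.insertNth s z : Fin (m+1) → ℝ) (i.succAbove j)
    simpa [Fin.insertNth_apply_succAbove] using this

lemma face_hausdorff_lt_top (i : Fin (m+1)) (s : ℝ) :
    μH[(m:ℝ)] {x : Fin (m+1) → ℝ | x i = s ∧ ∀ j, |x j| ≤ 1} < ⊤ := by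
  have hsub : {x : Fin (m+1) → ℝ | x i = s ∧ ∀ j, |x j| ≤ 1} ⊆
      (fun y : Fin m → ℝ => (i.insertNth s y : Fin (m+1) → ℝ)) '' (closedBall 0 1) := by
    rintro x ⟨hxi, hxj⟩
    refine ⟨i.removeNth x, ?_, ?_⟩
    · rw [mem_closedBall_zero_iff]
      refine (pi_norm_le_iff_of_nonneg zero_le_one).mpr fun j => ?_
      simpa [Real.norm_eq_abs, Fin.removeNth] using hxj _
    · rw [← hxi]
      exact Fin.insertNth_self_removeNth i x
  calc μH[(m:ℝ)] {x : Fin (m+1) → ℝ | x i = s ∧ ∀ j, |x j| ≤ 1}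
      ≤ μH[(m:ℝ)] ((fun y : Fin m → ℝ => (i.insertNth s y : Fin (m+1) → ℝ)) '' (closedBall 0 1)) :=
        measure_mono hsub
    _ = μH[(m:ℝ)] (closedBall (0 : Fin m → ℝ) 1) :=
        (isometry_insertNth i s).hausdorffMeasure_image
          (Or.inl (by positivity)) _
    _ < ⊤ := by
        have h := MeasureTheory.hausdorffMeasure_pi_real (ι := Fin m)
        simp only [Fintype.card_fin] at h
        rw [h]
        exact (isCompact_closedBall _ _).measure_lt_top

end HausdorffAux

section HausdorffAux2
variable {m : ℕ}

lemma sphere_hausdorff_lt_top :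
    μH[(m:ℝ)] (sphere (0 : Euc (m+1)) 1) < ⊤ := by
  classical
  set F : Fin (m+1) → ℝ → Set (Fin (m+1) → ℝ) :=
    fun i s => {x | x i = s ∧ ∀ j, |x j| ≤ 1} with hF
  set T : Set (Fin (m+1) → ℝ) := ⋃ i : Fin (m+1), (F i 1 ∪ F i (-1)) with hT
  have hTfin : μH[(m:ℝ)] T < ⊤ := by
    refine lt_of_le_of_lt (measure_iUnion_le _) ?_
    rw [tsum_fintype]
    refine ENNReal.sum_lt_top.mpr fun i _ => ?_
    exact lt_of_le_of_lt (measure_union_le _ _)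
      (ENNReal.add_lt_top.mpr ⟨face_hausdorff_lt_top i 1, face_hausdorff_lt_top i (-1)⟩)
  set e := WithLp.equiv 2 (Fin (m+1) → ℝ) with he
  set A : Set (Euc (m+1)) := e.symm '' T with hA
  have hAfin : μH[(m:ℝ)] A < ⊤ := by
    have hL : LipschitzWith ((Fintype.card (Fin (m+1)) : ℝ≥0) ^ (1/(2:ℝ≥0∞)).toReal) e.symm :=
      PiLp.lipschitzWith_toLp 2 _
    refine lt_of_le_of_lt (hL.hausdorffMeasure_image_le (by positivity) T) ?_
    exact ENNReal.mul_lt_top (ENNReal.rpow_lt_top_of_nonneg (by positivity) ENNReal.coe_ne_top) hTfin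
  have hA1 : A ⊆ {x : Euc (m+1) | 1 ≤ ‖x‖} := by
    rintro _ ⟨x, hx, rfl⟩
    simp only [hT, mem_iUnion, mem_union] at hx
    obtain ⟨i, hx⟩ := hx
    have hxi : |x i| = 1 := by
      rcases hx with hx | hx
      · obtain ⟨h, -⟩ := hx
        rw [h]; norm_num
      · obtain ⟨h, -⟩ := hx
        rw [h]; norm_num
    show (1:ℝ) ≤ ‖e.symm x‖
    rw [EuclideanSpace.norm_eq]
    have h1 : |x i| ^ 2 ≤ ∑ j, ‖e.symm x j‖ ^ 2 := by
      have h2 : ‖e.symm x i‖ ^ 2 ≤ ∑ j, ‖e.symm x j‖ ^ 2 :=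
        Finset.single_le_sum (f := fun j => ‖e.symm x j‖ ^ 2)
          (fun j _ => by positivity) (Finset.mem_univ i)
      simpa [he, WithLp.equiv_symm_apply, Real.norm_eq_abs] using h2
    calc (1:ℝ) = Real.sqrt (|x i| ^ 2) := by rw [hxi]; simp
      _ ≤ _ := Real.sqrt_le_sqrt h1
  have hcover : sphere (0 : Euc (m+1)) 1 ⊆ (fun x : Euc (m+1) => ‖x‖⁻¹ • x) '' A := by
    intro u hu
    rw [mem_sphere_zero_iff_norm] at hu
    have hu0 : u ≠ 0 := by
      intro h; rw [h] at hu; simp at hu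
    set y : Fin (m+1) → ℝ := e u with hy
    have hy0 : y ≠ 0 := by
      intro h
      apply hu0
      have h2 : e.symm y = e.symm 0 := by rw [h]
      simpa [hy, he, WithLp.equiv_symm_apply] using h2
    set c : ℝ := ‖y‖ with hc
    have hc0 : 0 < c := norm_pos_iff.mpr hy0
    obtain ⟨i, -, hi⟩ := Finset.exists_mem_eq_sup Finset.univ Finset.univ_nonempty
      (fun i => ‖y i‖₊)
    have hci : c = |y i| := by
      have h3 : ‖y‖₊ = ‖y i‖₊ := by rw [Pi.nnnorm_def, hi]
      calc c = (‖y‖₊ : ℝ) := rfl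
        _ = (‖y i‖₊ : ℝ) := by rw [h3]
        _ = |y i| := by simp [Real.norm_eq_abs]
    set x : Euc (m+1) := c⁻¹ • u with hxdef
    have hex : ∀ j, e x j = c⁻¹ * y j := by
      intro j
      simp [hxdef, hy, he]
    have hcoord : ∀ j, |e x j| ≤ 1 := by
      intro j
      have h4 : |y j| ≤ c := by
        simpa [Real.norm_eq_abs] using norm_le_pi_norm y j
      rw [hex, abs_mul, abs_of_nonneg (by positivity : (0:ℝ) ≤ c⁻¹)]
      calc c⁻¹ * |y j| ≤ c⁻¹ * c := by
            exact mul_le_mul_of_nonneg_left h4 (by positivity)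
        _ = 1 := inv_mul_cancel₀ hc0.ne'
    have hsign : e x i = 1 ∨ e x i = -1 := by
      have h5 : |e x i| = 1 := by
        rw [hex, abs_mul, abs_of_nonneg (by positivity : (0:ℝ) ≤ c⁻¹), ← hci]
        exact inv_mul_cancel₀ hc0.ne'
      exact (abs_eq (by norm_num : (0:ℝ) ≤ 1)).mp h5
    have hmemT : e x ∈ T := by
      rw [hT, mem_iUnion]
      refine ⟨i, ?_⟩
      rcases hsign with h | h
      · exact Or.inl ⟨h, hcoord⟩
      · exact Or.inr ⟨h, hcoord⟩
    have hxA : x ∈ A := ⟨e x, hmemT, by simp⟩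
    refine ⟨x, hxA, ?_⟩
    have hnx : ‖x‖ = c⁻¹ := by
      rw [hxdef, norm_smul, hu, mul_one, Real.norm_eq_abs,
        abs_of_nonneg (by positivity : (0:ℝ) ≤ c⁻¹)]
    show ‖x‖⁻¹ • x = u
    rw [hnx, hxdef, smul_smul, inv_inv, mul_inv_cancel₀ hc0.ne', one_smul]
  calc μH[(m:ℝ)] (sphere (0 : Euc (m+1)) 1)
      ≤ μH[(m:ℝ)] ((fun x : Euc (m+1) => ‖x‖⁻¹ • x) '' A) := measure_mono hcover
    _ ≤ ((2:ℝ≥0) : ℝ≥0∞) ^ (m:ℝ) * μH[(m:ℝ)] A :=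
        (lipschitzOnWith_normalize.mono hA1).hausdorffMeasure_image_le
          (by positivity)
    _ < ⊤ := ENNReal.mul_lt_top (ENNReal.rpow_lt_top_of_nonneg (by positivity) ENNReal.coe_ne_top) hAfin

end HausdorffAux2

section CapAux
variable {m : ℕ}

lemma capSet_e0_pos :
    0 < μH[(m:ℝ)] (capSet (EuclideanSpace.single (0 : Fin (m+1)) (1:ℝ))) := by
  classical
  set e0 : Euc (m+1) := EuclideanSpace.single (0 : Fin (m+1)) (1:ℝ) with he0
  set p : Euc (m+1) → Euc m := fun x => WithLp.toLp 2 (fun j : Fin m => x j.succ)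
    with hp_def
  have hp : LipschitzWith 1 p := by
    apply LipschitzWith.of_dist_le_mul
    intro x y
    rw [NNReal.coe_one, one_mul, EuclideanSpace.dist_eq, EuclideanSpace.dist_eq]
    apply Real.sqrt_le_sqrt
    rw [Fin.sum_univ_succ]
    have h0 : (0:ℝ) ≤ dist (x 0) (y 0) ^ 2 := sq_nonneg _
    have : ∑ j : Fin m, dist (p x j) (p y j) ^ 2 = ∑ j : Fin m, dist (x j.succ) (y j.succ) ^ 2 := rfl
    rw [this]
    linarith
  have hball : closedBall (0 : Euc m) (1/2) ⊆ p '' (capSet e0) := by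
    intro y hy
    rw [mem_closedBall_zero_iff] at hy
    have hy2 : ‖y‖ ^ 2 ≤ (1/2 : ℝ) ^ 2 := by
      exact pow_le_pow_left₀ (norm_nonneg _) hy 2
    have hy2' : 1 - ‖y‖ ^ 2 ∈ Icc (3/4 : ℝ) 1 := by
      constructor
      · nlinarith
      · nlinarith [sq_nonneg ‖y‖]
    set a : ℝ := Real.sqrt (1 - ‖y‖ ^ 2) with ha
    set u : Euc (m+1) := WithLp.toLp 2 (fun i : Fin (m+1) => Fin.cases a (fun j => y j) i)
      with hu
    have hu0 : u 0 = a := rfl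
    have hus : ∀ j : Fin m, u j.succ = y j := fun j => rfl
    have hsumy : ∑ j : Fin m, ‖y j‖ ^ 2 = ‖y‖ ^ 2 := by
      rw [EuclideanSpace.norm_eq]
      rw [Real.sq_sqrt (by positivity)]
    have hnormu : ‖u‖ = 1 := by
      rw [EuclideanSpace.norm_eq, Fin.sum_univ_succ]
      have : ∀ j : Fin m, ‖u j.succ‖ ^ 2 = ‖y j‖ ^ 2 := fun j => by rw [hus]
      rw [Finset.sum_congr rfl (fun j _ => this j), hsumy, hu0]
      rw [Real.norm_eq_abs, sq_abs, ha, Real.sq_sqrt (by linarith [hy2'.1])]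
      simp
    have hmem : u ∈ capSet e0 := by
      constructor
      · show 1/2 ≤ (inner ℝ u e0 : ℝ)
        rw [he0]
        rw [EuclideanSpace.inner_single_right]
        simp only [map_one, one_mul, RCLike.star_def, starRingEnd_apply, star_trivial]
        rw [hu0, ha]
        rw [show (1/2 : ℝ) = Real.sqrt (1/4) by
          rw [show (1/4 : ℝ) = (1/2)^2 by norm_num, Real.sqrt_sq (by norm_num)]]
        exact Real.sqrt_le_sqrt (by linarith [hy2'.1])
      · rw [mem_sphere_zero_iff_norm]
        exact hnormu
    exact ⟨u, hmem, PiLp.ext fun j => hus j⟩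
  have h1 : μH[(m:ℝ)] (closedBall (0 : Euc m) (1/2)) ≤ μH[(m:ℝ)] (capSet e0) := by
    calc μH[(m:ℝ)] (closedBall (0 : Euc m) (1/2)) ≤ μH[(m:ℝ)] (p '' capSet e0) :=
          measure_mono hball
      _ ≤ ((1:ℝ≥0) : ℝ≥0∞) ^ (m:ℝ) * μH[(m:ℝ)] (capSet e0) :=
          hp.hausdorffMeasure_image_le (by positivity) _
      _ = μH[(m:ℝ)] (capSet e0) := by simp
  refine lt_of_lt_of_le ?_ h1
  -- positivity of the ball measure
  set r0 : ℝ := 1/(2*(Real.sqrt m + 1)) with hr0def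
  have hr0 : 0 < r0 := by positivity
  set e := WithLp.equiv 2 (Fin m → ℝ) with he
  have hsub : ball (0 : Fin m → ℝ) r0 ⊆ e '' (closedBall (0 : Euc m) (1/2)) := by
    intro x hx
    rw [mem_ball_zero_iff] at hx
    refine ⟨e.symm x, ?_, by simp⟩
    rw [mem_closedBall_zero_iff, EuclideanSpace.norm_eq]
    have hxj : ∀ j, ‖x j‖ ≤ r0 := fun j => (norm_le_pi_norm x j).trans hx.le
    have hsum : ∑ j, ‖e.symm x j‖ ^ 2 ≤ (m : ℝ) * r0 ^ 2 := by
      have : ∀ j : Fin m, ‖e.symm x j‖ ^ 2 ≤ r0 ^ 2 := by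
        intro j
        have : ‖e.symm x j‖ ≤ r0 := by
          simpa [he, WithLp.equiv_symm_apply] using hxj j
        exact pow_le_pow_left₀ (norm_nonneg _) this 2
      calc ∑ j, ‖e.symm x j‖ ^ 2 ≤ ∑ _j : Fin m, r0 ^ 2 :=
            Finset.sum_le_sum fun j _ => this j
        _ = (m : ℝ) * r0 ^ 2 := by simp [mul_comm]
    calc Real.sqrt (∑ j, ‖e.symm x j‖ ^ 2) ≤ Real.sqrt ((m:ℝ) * r0 ^ 2) :=
          Real.sqrt_le_sqrt hsum
      _ = Real.sqrt (m:ℝ) * r0 := by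
          rw [Real.sqrt_mul (Nat.cast_nonneg m), Real.sqrt_sq hr0.le]
      _ ≤ 1/2 := by
          rw [hr0def]
          rw [div_eq_mul_inv, one_mul]
          rw [show ((2:ℝ) * (Real.sqrt m + 1))⁻¹ = (2⁻¹ : ℝ) * (Real.sqrt m + 1)⁻¹ by
            rw [mul_inv]]
          have hs1 : (0:ℝ) < Real.sqrt m + 1 := by positivity
          calc Real.sqrt (m:ℝ) * ((2⁻¹ : ℝ) * (Real.sqrt m + 1)⁻¹)
              = 2⁻¹ * (Real.sqrt (m:ℝ) * (Real.sqrt m + 1)⁻¹) := by ring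
            _ ≤ 2⁻¹ * 1 := by
                refine mul_le_mul_of_nonneg_left ?_ (by norm_num)
                rw [← div_eq_mul_inv]
                exact div_le_one_of_le₀ (by linarith) hs1.le
            _ = 1/2 := by norm_num
  have hpi := MeasureTheory.hausdorffMeasure_pi_real (ι := Fin m)
  simp only [Fintype.card_fin] at hpi
  have hL : LipschitzWith 1 e := PiLp.lipschitzWith_ofLp 2 _
  have h2 : μH[(m:ℝ)] (ball (0 : Fin m → ℝ) r0) ≤
      μH[(m:ℝ)] (e '' closedBall (0 : Euc m) (1/2)) := measure_mono hsub
  have h3 : μH[(m:ℝ)] (e '' closedBall (0 : Euc m) (1/2)) ≤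
      ((1:ℝ≥0) : ℝ≥0∞) ^ (m:ℝ) * μH[(m:ℝ)] (closedBall (0 : Euc m) (1/2)) :=
    hL.hausdorffMeasure_image_le (by positivity) _
  have hb : (0:ℝ≥0∞) < μH[(m:ℝ)] (ball (0 : Fin m → ℝ) r0) := by
    rw [hpi]
    exact measure_ball_pos _ _ hr0
  calc (0:ℝ≥0∞) < μH[(m:ℝ)] (ball (0 : Fin m → ℝ) r0) := hb
    _ ≤ μH[(m:ℝ)] (e '' closedBall (0 : Euc m) (1/2)) := h2
    _ ≤ ((1:ℝ≥0) : ℝ≥0∞) ^ (m:ℝ) * μH[(m:ℝ)] (closedBall (0 : Euc m) (1/2)) := h3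
    _ = μH[(m:ℝ)] (closedBall (0 : Euc m) (1/2)) := by simp

lemma capSet_measure_lower {v : Euc (m+1)} (hv : ‖v‖ = 1) :
    μH[(m:ℝ)] (capSet (EuclideanSpace.single (0 : Fin (m+1)) (1:ℝ))) ≤
      μH[(m:ℝ)] (capSet v) := by
  set e0 : Euc (m+1) := EuclideanSpace.single (0 : Fin (m+1)) (1:ℝ) with he0
  have hne0 : ‖e0‖ = 1 := by
    rw [he0, EuclideanSpace.norm_single]
    norm_num
  set f := Submodule.reflection (ℝ ∙ (v - e0))ᗮ with hf
  have hfv : f v = e0 := Submodule.reflection_sub (by rw [hv, hne0])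
  have hfe : f e0 = v := by
    conv_lhs => rw [← hfv]
    exact Submodule.reflection_involutive _ v
  have himg : f '' capSet e0 ⊆ capSet v := by
    rintro _ ⟨u, ⟨hu1, hu2⟩, rfl⟩
    constructor
    · show 1/2 ≤ (inner ℝ (f u) v : ℝ)
      rw [← hfe, LinearIsometryEquiv.inner_map_map]
      exact hu1
    · rw [mem_sphere_zero_iff_norm] at hu2 ⊢
      rw [LinearIsometryEquiv.norm_map]
      exact hu2
  calc μH[(m:ℝ)] (capSet e0) = μH[(m:ℝ)] (f '' capSet e0) :=
        (f.isometry.hausdorffMeasure_image (Or.inl (by positivity)) _).symm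
    _ ≤ μH[(m:ℝ)] (capSet v) := measure_mono himg

end CapAux

/-- bounded dual mixed volumes imply uniformly bounded polar bodies (q < 0). -/
theorem polarBody_bounded_of_dualMixedVol_bounded {n : ℕ} (Q : Set (Euc n)) (q : ℝ)
    (hQ : IsStarBody Q) (hq : q < 0)
    (K : ℕ → Set (Euc n)) (hK : ∀ i, IsConvexBody (K i))
    (hb : ∃ C : ℝ, ∀ i, dualMixedVol q (K i) Q ≤ C) :
    ∃ M : ℝ, 1 < M ∧ ∀ i, polarBody (K i) ⊆ closedBall (0 : Euc n) M := by
  classical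
  obtain ⟨C, hC⟩ := hb
  cases n with
  | zero =>
    refine ⟨2, one_lt_two, fun i x hx => ?_⟩
    have hx0 : x = 0 := Subsingleton.elim x 0
    rw [hx0]
    simp only [mem_closedBall, dist_self]
    norm_num
  | succ m =>
    have hd : ((m + 1 : ℕ) : ℝ) - 1 = (m : ℝ) := by push_cast; ring
    -- star body data
    obtain ⟨RQ, hRQ⟩ := hQ.1.isBounded.subset_closedBall 0
    have hQ0 : (0 : Euc (m+1)) ∈ Q := interior_subset hQ.2.1
    have hRQnn : (0:ℝ) ≤ RQ := by
      have h := hRQ hQ0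
      rwa [mem_closedBall_zero_iff, norm_zero] at h
    obtain ⟨ε, hε, hεQ⟩ := exists_radialFn_lower hQ.2.1 hRQ
    have measQ : Measurable (radialFn Q) :=
      measurable_radialFn hQ.1.isClosed hQ0 hQ.2.2.1 hRQ
    -- sphere measure facts
    have hsph : μH[(m:ℝ)] (sphere (0 : Euc (m+1)) 1) < ⊤ := sphere_hausdorff_lt_top
    set e0 : Euc (m+1) := EuclideanSpace.single (0 : Fin (m+1)) (1 : ℝ) with he0
    have hcap0 : 0 < μH[(m:ℝ)] (capSet e0) := capSet_e0_pos
    have hcapsub0 : capSet e0 ⊆ sphere (0 : Euc (m+1)) 1 := inter_subset_right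
    have hcap0top : μH[(m:ℝ)] (capSet e0) ≠ ⊤ :=
      ((measure_mono hcapsub0).trans_lt hsph).ne
    set s₀ : ℝ := (μH[(m:ℝ)] (capSet e0)).toReal with hs₀def
    have hs₀ : 0 < s₀ := ENNReal.toReal_pos hcap0.ne' hcap0top
    -- constants
    set nn : ℝ := ((m + 1 : ℕ) : ℝ) with hnndef
    have hnn : (0:ℝ) < nn := by positivity
    have hnq : (0:ℝ) ≤ nn - q := by
      have : (0:ℝ) ≤ nn := hnn.le
      linarith
    have h2q : (0:ℝ) < (2:ℝ) ^ q := Real.rpow_pos_of_pos two_pos q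
    have hεq : (0:ℝ) < ε ^ (nn - q) := Real.rpow_pos_of_pos hε _
    set c₀ : ℝ := (1/nn) * ((2:ℝ) ^ q * ε ^ (nn - q) * s₀) with hc₀def
    have hc₀ : 0 < c₀ := by
      apply mul_pos (by positivity)
      exact mul_pos (mul_pos h2q hεq) hs₀
    have htend : Tendsto (fun R : ℝ => c₀ * R ^ (-q)) atTop atTop :=
      (tendsto_const_mul_atTop_of_pos hc₀).mpr (tendsto_rpow_atTop (by linarith))
    obtain ⟨M₀, hM₀⟩ := eventually_atTop.mp (htend.eventually_gt_atTop C)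
    refine ⟨max M₀ 2, lt_of_lt_of_le one_lt_two (le_max_right _ _), fun i x hx => ?_⟩
    rw [mem_closedBall_zero_iff]
    by_contra hxn
    push_neg at hxn
    set R : ℝ := ‖x‖ with hRdef
    have hR2 : (2:ℝ) < R := lt_of_le_of_lt (le_max_right _ _) hxn
    have hR0 : (0:ℝ) < R := by linarith
    have hRM₀ : M₀ ≤ R := le_of_lt (lt_of_le_of_lt (le_max_left _ _) hxn)
    have hx0 : x ≠ 0 := by
      intro h
      rw [hRdef, h, norm_zero] at hR0
      exact lt_irrefl _ hR0
    -- convex body data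
    obtain ⟨hKc, hKconv, hK0i⟩ := hK i
    have hK0 : (0 : Euc (m+1)) ∈ K i := interior_subset hK0i
    obtain ⟨RK, hRK⟩ := hKc.isBounded.subset_closedBall 0
    obtain ⟨εK, hεK, hεKl⟩ := exists_radialFn_lower hK0i hRK
    have measK : Measurable (radialFn (K i)) := by
      refine measurable_radialFn hKc.isClosed hK0 (fun y hy t ht0 ht1 => ?_) hRK
      exact hKconv.smul_mem_of_zero_mem hK0 hy ⟨ht0, ht1⟩
    set v : Euc (m+1) := R⁻¹ • x with hvdef
    have hnv : ‖v‖ = 1 := by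
      rw [hvdef, norm_smul, Real.norm_eq_abs, abs_of_nonneg (inv_nonneg.mpr hR0.le),
        ← hRdef, inv_mul_cancel₀ hR0.ne']
    -- the integrand
    set f : Euc (m+1) → ℝ := fun u => radialFn (K i) u ^ q * radialFn Q u ^ (nn - q)
      with hfdef
    have hfm : Measurable f := (measK.pow measurable_const).mul (measQ.pow measurable_const)
    set σ : Measure (Euc (m+1)) := sphμ (m+1) with hσ
    have hσdef : σ = (μH[(m:ℝ)] : Measure (Euc (m+1))).restrict (sphere 0 1) := by
      rw [hσ]
      unfold sphμ
      rw [hd]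
    have hfin : IsFiniteMeasure σ := by
      constructor
      rw [hσdef, Measure.restrict_apply_univ]
      exact hsph
    have hfnn : ∀ u, 0 ≤ f u := fun u =>
      mul_nonneg (Real.rpow_nonneg (radialFn_nonneg _ u) _)
        (Real.rpow_nonneg (radialFn_nonneg _ u) _)
    have hbound : ∀ u ∈ sphere (0 : Euc (m+1)) 1, f u ≤ εK ^ q * RQ ^ (nn - q) := by
      intro u hu
      rw [mem_sphere_zero_iff_norm] at hu
      have h1 : radialFn (K i) u ^ q ≤ εK ^ q :=
        Real.rpow_le_rpow_of_nonpos hεK (hεKl u hu) hq.le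
      have h2 : radialFn Q u ^ (nn - q) ≤ RQ ^ (nn - q) :=
        Real.rpow_le_rpow (radialFn_nonneg Q u) (radialFn_le hRQnn hRQ hu) hnq
      exact mul_le_mul h1 h2 (Real.rpow_nonneg (radialFn_nonneg Q u) _)
        (Real.rpow_nonneg hεK.le _)
    have hInt : Integrable f σ := by
      refine Integrable.mono' (integrable_const (εK ^ q * RQ ^ (nn - q)))
        hfm.aestronglyMeasurable ?_
      rw [hσdef, ae_restrict_iff' isClosed_sphere.measurableSet]
      filter_upwards with u hu
      rw [Real.norm_eq_abs, abs_of_nonneg (hfnn u)]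
      exact hbound u hu
    -- cap facts
    have hcapMeas : MeasurableSet (capSet v) := by
      refine MeasurableSet.inter ?_ isClosed_sphere.measurableSet
      exact measurableSet_le measurable_const
        ((continuous_id.inner continuous_const).measurable)
    have hcapsub : capSet v ⊆ sphere (0 : Euc (m+1)) 1 := inter_subset_right
    have hσcap : σ (capSet v) = μH[(m:ℝ)] (capSet v) := by
      rw [hσdef, Measure.restrict_apply hcapMeas, inter_eq_self_of_subset_left hcapsub]
    have hcapfin : σ (capSet v) ≠ ⊤ := by
      rw [hσcap]
      exact ((measure_mono hcapsub).trans_lt hsph).ne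
    have hcaplow : s₀ ≤ (σ (capSet v)).toReal := by
      rw [hσcap, hs₀def]
      exact ENNReal.toReal_mono ((measure_mono hcapsub).trans_lt hsph).ne
        (capSet_measure_lower hnv)
    -- pointwise lower bound on the cap
    have hpt : ∀ u ∈ capSet v, (2/R) ^ q * ε ^ (nn - q) ≤ f u := by
      rintro u ⟨hu1, hu2⟩
      rw [mem_sphere_zero_iff_norm] at hu2
      have h5 : (1:ℝ)/2 ≤ (inner ℝ u v : ℝ) := hu1
      rw [hvdef, real_inner_smul_right] at h5
      have h6 := mul_le_mul_of_nonneg_left h5 hR0.le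
      rw [← mul_assoc, mul_inv_cancel₀ hR0.ne', one_mul] at h6
      have hinnerxu : R/2 ≤ (inner ℝ x u : ℝ) := by
        rw [real_inner_comm]
        linarith
      have hle : radialFn (K i) u ≤ 2/R := by
        have h7 := radialFn_le_of_polar hx (by positivity : (0:ℝ) < R/2) hinnerxu
        rwa [one_div_div] at h7
      have hKpos : 0 < radialFn (K i) u := lt_of_lt_of_le hεK (hεKl u hu2)
      have h8 : (2/R) ^ q ≤ radialFn (K i) u ^ q :=
        Real.rpow_le_rpow_of_nonpos hKpos hle hq.le
      have h9 : ε ^ (nn - q) ≤ radialFn Q u ^ (nn - q) :=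
        Real.rpow_le_rpow hε.le (hεQ u hu2) hnq
      exact mul_le_mul h8 h9 (Real.rpow_nonneg hε.le _)
        (Real.rpow_nonneg (radialFn_nonneg _ u) _)
    -- the integral chain
    have hchain : (2/R) ^ q * ε ^ (nn - q) * (σ (capSet v)).toReal ≤ ∫ u, f u ∂σ := by
      calc (2/R) ^ q * ε ^ (nn - q) * (σ (capSet v)).toReal
          ≤ ∫ u in capSet v, f u ∂σ :=
            by have h := setIntegral_ge_of_const_le_real hcapMeas hcapfin hpt hInt.integrableOn
               rwa [measureReal_def] at h
        _ ≤ ∫ u, f u ∂σ := setIntegral_le_integral hInt (Eventually.of_forall hfnn)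
    have hdmv : dualMixedVol q (K i) Q = (1/nn) * ∫ u, f u ∂σ := rfl
    have h2Rq : (0:ℝ) < (2/R) ^ q := Real.rpow_pos_of_pos (by positivity) q
    have hfinal : c₀ * R ^ (-q) ≤ dualMixedVol q (K i) Q := by
      rw [hdmv]
      have h9 : (2/R : ℝ) ^ q = 2 ^ q * R ^ (-q) := by
        rw [Real.div_rpow (by norm_num) hR0.le, Real.rpow_neg hR0.le, div_eq_mul_inv]
      have h8 : c₀ * R ^ (-q) = (1/nn) * ((2/R) ^ q * ε ^ (nn - q) * s₀) := by
        rw [hc₀def, h9]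
        ring
      rw [h8]
      refine mul_le_mul_of_nonneg_left ?_ (by positivity)
      calc (2/R) ^ q * ε ^ (nn - q) * s₀
          ≤ (2/R) ^ q * ε ^ (nn - q) * (σ (capSet v)).toReal := by
            refine mul_le_mul_of_nonneg_left hcaplow ?_
            exact mul_nonneg h2Rq.le hεq.le
        _ ≤ ∫ u, f u ∂σ := hchain
    have hlt : C < dualMixedVol q (K i) Q := lt_of_lt_of_le (hM₀ R hRM₀) hfinal
    exact absurd (hC i) (not_le.mpr hlt)
end
end

section
/- Suppose a sequence of convex bodies K_i in ℝⁿ with origin in their interiors converges in the Hausdorff metric to a compact convex set K with the origin on its boundary, and μ is a nonzero finite Borel measure on S^{n−1} not concentrated in any closed hemisphere. Then there exist δ₀ ∈ (0,1) and u₀ ∈ S^{n−1} such that μ(ω_{δ₀}(u₀)) > 0 and the radial functions ρ_{K_i} converge to 0 uniformly on ω_{δ₀}(u₀), where ω_δ(u) = {v ∈ S^{n−1} : v·u > δ}. -/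
open MeasureTheory Metric Set Filter Pointwise
open scoped Classical

noncomputable section

lemma exists_support_vector {n : ℕ} {K₀ : Set (Euc n)} (hcpt : IsCompact K₀)
    (hcvx : Convex ℝ K₀) (h0 : (0 : Euc n) ∈ frontier K₀) :
    ∃ u₀ ∈ sphere (0 : Euc n) 1, ∀ x ∈ K₀, (inner ℝ u₀ x : ℝ) ≤ 0 := by
  have hcl : IsClosed K₀ := hcpt.isClosed
  have h0K : (0 : Euc n) ∈ K₀ := hcl.closure_eq ▸ frontier_subset_closure h0
  have h0c : (0 : Euc n) ∈ closure K₀ᶜ := by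
    rw [frontier_eq_closure_inter_closure] at h0; exact h0.2
  obtain ⟨x, hxK, hxlim⟩ := mem_closure_iff_seq_limit.mp h0c
  have hk : ∀ k : ℕ, ∃ u : Euc n, ‖u‖ = 1 ∧ ∀ b ∈ K₀, (inner ℝ u b : ℝ) ≤ ‖x k‖ := by
    intro k
    obtain ⟨f, s, hfb, hfx⟩ := geometric_hahn_banach_closed_point hcvx hcl (hxK k)
    set v : Euc n := (InnerProductSpace.toDual ℝ (Euc n)).symm f with hv
    have hvy : ∀ y : Euc n, (inner ℝ v y : ℝ) = f y := fun y =>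
      InnerProductSpace.toDual_symm_apply
    have hf0 : (0:ℝ) < s := by simpa using hfb 0 h0K
    have hvne : v ≠ 0 := by
      intro h
      have := hvy (x k)
      rw [h, inner_zero_left] at this
      have : f (x k) = 0 := this.symm
      linarith [hfx]
    have hn1 : ‖‖v‖⁻¹ • v‖ = 1 := by
      rw [norm_smul, norm_inv, norm_norm, inv_mul_cancel₀ (norm_ne_zero_iff.mpr hvne)]
    refine ⟨‖v‖⁻¹ • v, hn1, fun b hb => ?_⟩
    have h1 : (inner ℝ (‖v‖⁻¹ • v) b : ℝ) = ‖v‖⁻¹ * f b := by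
      rw [real_inner_smul_left, hvy]
    have h2 : (inner ℝ (‖v‖⁻¹ • v) (x k) : ℝ) = ‖v‖⁻¹ * f (x k) := by
      rw [real_inner_smul_left, hvy]
    have hinv : (0:ℝ) ≤ ‖v‖⁻¹ := by positivity
    have h3 : (inner ℝ (‖v‖⁻¹ • v) b : ℝ) ≤ (inner ℝ (‖v‖⁻¹ • v) (x k) : ℝ) := by
      rw [h1, h2]
      exact mul_le_mul_of_nonneg_left (le_of_lt ((hfb b hb).trans hfx)) hinv
    calc (inner ℝ (‖v‖⁻¹ • v) b : ℝ) ≤ (inner ℝ (‖v‖⁻¹ • v) (x k) : ℝ) := h3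
      _ ≤ ‖‖v‖⁻¹ • v‖ * ‖x k‖ := real_inner_le_norm _ _
      _ = ‖x k‖ := by rw [hn1, one_mul]
  choose u hu1 hu2 using hk
  have husph : ∀ k, u k ∈ sphere (0 : Euc n) 1 := fun k => by
    simpa [mem_sphere_iff_norm] using hu1 k
  obtain ⟨u₀, hu₀, φ, hφ, hulim⟩ := (isCompact_sphere (0 : Euc n) 1).tendsto_subseq husph
  refine ⟨u₀, hu₀, fun b hb => ?_⟩
  have hlim1 : Tendsto (fun k => (inner ℝ (u (φ k)) b : ℝ)) atTop (nhds (inner ℝ u₀ b : ℝ)) := by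
    exact ((continuous_inner.comp (continuous_id.prodMk continuous_const)).continuousAt.tendsto.comp
      hulim)
  have hlim2 : Tendsto (fun k => ‖x (φ k)‖) atTop (nhds 0) := by
    simpa using ((hxlim.comp hφ.tendsto_atTop).norm)
  exact le_of_tendsto_of_tendsto' hlim1 hlim2 fun k => hu2 (φ k) b hb

/-- if K_i → K with o ∈ ∂K, then ρ_{K_i} → 0 uniformly on a spherical cap
of positive measure for any measure not concentrated in a closed hemisphere. -/
theorem radialFn_tendstoUniformlyOn_cap {n : ℕ}
    (K : ℕ → Set (Euc n)) (K₀ : Set (Euc n))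
    (hKi : ∀ i, IsConvexBody (K i))
    (hcpt : IsCompact K₀) (hcvx : Convex ℝ K₀)
    (h0 : (0 : Euc n) ∈ frontier K₀)
    (hconv : Tendsto (fun i => Metric.hausdorffDist (K i) K₀) atTop (nhds 0))
    (μ : Measure (Euc n)) [IsFiniteMeasure μ] (hμ0 : μ ≠ 0)
    (hsupp : μ (sphere (0 : Euc n) 1)ᶜ = 0)
    (hconc : ¬ ∃ u ∈ sphere (0 : Euc n) 1,
        μ {v : Euc n | (0:ℝ) ≤ inner ℝ v u} = μ Set.univ) :
    ∃ δ ∈ Ioo (0:ℝ) 1, ∃ u₀ ∈ sphere (0 : Euc n) 1,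
      0 < μ {v ∈ sphere (0 : Euc n) 1 | δ < (inner ℝ v u₀ : ℝ)} ∧
      TendstoUniformlyOn (fun i => radialFn (K i)) 0 atTop
        {v ∈ sphere (0 : Euc n) 1 | δ < (inner ℝ v u₀ : ℝ)} := by
  --

  obtain ⟨u₀, hu₀, hsupp0⟩ := exists_support_vector hcpt hcvx h0
  have h0K : (0 : Euc n) ∈ K₀ := hcpt.isClosed.closure_eq ▸ frontier_subset_closure h0
  -- positivity of the open hemisphere
  have hneg : -u₀ ∈ sphere (0 : Euc n) 1 := by
    simpa [mem_sphere_iff_norm] using hu₀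
  have hA : μ {v : Euc n | (0:ℝ) ≤ inner ℝ v (-u₀)} ≠ μ Set.univ :=
    fun h => hconc ⟨-u₀, hneg, h⟩
  set A : Set (Euc n) := {v : Euc n | (0:ℝ) ≤ inner ℝ v (-u₀)} with hAdef
  have hAc : Aᶜ = {v : Euc n | (0:ℝ) < inner ℝ v u₀} := by
    ext v
    simp only [hAdef, mem_compl_iff, mem_setOf_eq, not_le, inner_neg_right]
    constructor <;> intro h <;> linarith
  have hApos : 0 < μ Aᶜ := by
    rcases eq_or_ne (μ Aᶜ) 0 with hz | hz
    · exfalso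
      apply hA
      refine le_antisymm (measure_mono (subset_univ _)) ?_
      calc μ Set.univ = μ (A ∪ Aᶜ) := by rw [union_compl_self]
        _ ≤ μ A + μ Aᶜ := measure_union_le _ _
        _ = μ A := by rw [hz, add_zero]
    · exact hz.bot_lt
  have hposS : 0 < μ {v ∈ sphere (0 : Euc n) 1 | (0:ℝ) < inner ℝ v u₀} := by
    have hsub : Aᶜ ⊆ {v ∈ sphere (0 : Euc n) 1 | (0:ℝ) < inner ℝ v u₀} ∪
        (sphere (0 : Euc n) 1)ᶜ := by
      intro v hv
      rw [hAc] at hv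
      by_cases hvs : v ∈ sphere (0 : Euc n) 1
      · exact Or.inl ⟨hvs, hv⟩
      · exact Or.inr hvs
    calc (0:ENNReal) < μ Aᶜ := hApos
      _ ≤ μ ({v ∈ sphere (0 : Euc n) 1 | (0:ℝ) < inner ℝ v u₀} ∪ (sphere (0 : Euc n) 1)ᶜ) :=
          measure_mono hsub
      _ ≤ μ {v ∈ sphere (0 : Euc n) 1 | (0:ℝ) < inner ℝ v u₀} + μ (sphere (0 : Euc n) 1)ᶜ :=
          measure_union_le _ _
      _ = μ {v ∈ sphere (0 : Euc n) 1 | (0:ℝ) < inner ℝ v u₀} := by rw [hsupp, add_zero]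
  -- find δ
  have hcover : {v ∈ sphere (0 : Euc n) 1 | (0:ℝ) < inner ℝ v u₀} ⊆
      ⋃ k : ℕ, {v ∈ sphere (0 : Euc n) 1 | (1:ℝ)/((k:ℝ)+2) < inner ℝ v u₀} := by
    rintro v ⟨hv1, hv2⟩
    obtain ⟨k, hk⟩ := exists_nat_one_div_lt hv2
    refine mem_iUnion.mpr ⟨k, hv1, ?_⟩
    have h12 : (1:ℝ)/((k:ℝ)+2) < 1/((k:ℝ)+1) := by
      apply one_div_lt_one_div_of_lt <;> [positivity; linarith]
    linarith
  have hexk : ∃ k : ℕ, 0 < μ {v ∈ sphere (0 : Euc n) 1 | (1:ℝ)/((k:ℝ)+2) < inner ℝ v u₀} := by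
    by_contra hcon
    push_neg at hcon
    have hz : ∀ k : ℕ, μ {v ∈ sphere (0 : Euc n) 1 | (1:ℝ)/((k:ℝ)+2) < inner ℝ v u₀} = 0 :=
      fun k => le_antisymm (hcon k) (zero_le)
    have : μ {v ∈ sphere (0 : Euc n) 1 | (0:ℝ) < inner ℝ v u₀} = 0 :=
      measure_mono_null hcover (measure_iUnion_null hz)
    rw [this] at hposS
    exact lt_irrefl _ hposS
  obtain ⟨k, hkpos⟩ := hexk
  set δ : ℝ := 1/((k:ℝ)+2) with hδdef
  have hδ0 : 0 < δ := by positivity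
  have hδ1 : δ < 1 := by
    rw [hδdef, div_lt_one (by positivity)]
    have : (0:ℝ) ≤ (k:ℝ) := Nat.cast_nonneg k
    linarith
  refine ⟨δ, ⟨hδ0, hδ1⟩, u₀, hu₀, hkpos, ?_⟩
  -- uniform convergence
  rw [Metric.tendstoUniformlyOn_iff]
  intro ε hε
  have hεδ : (0:ℝ) < ε * δ := by positivity
  have hev : ∀ᶠ i in atTop, Metric.hausdorffDist (K i) K₀ < ε * δ :=
    hconv.eventually (Filter.Tendsto.eventually_lt_const hεδ tendsto_id)
  filter_upwards [hev] with i hi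
  rintro v ⟨hv1, hv2⟩
  obtain ⟨hKic, hKicvx, hKi0⟩ := hKi i
  have h0Ki : (0 : Euc n) ∈ K i := interior_subset hKi0
  have hKine : (K i).Nonempty := ⟨0, h0Ki⟩
  have hK₀ne : K₀.Nonempty := ⟨0, h0K⟩
  have hfin : EMetric.hausdorffEdist (K i) K₀ ≠ ⊤ :=
    Metric.hausdorffEdist_ne_top_of_nonempty_of_bounded hKine hK₀ne hKic.isBounded hcpt.isBounded
  have hcontinner : Continuous fun x : Euc n => (inner ℝ u₀ x : ℝ) :=
    continuous_const.inner continuous_id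
  have hbddim : BddAbove ((fun x => (inner ℝ u₀ x : ℝ)) '' (K i)) :=
    (hKic.image hcontinner).bddAbove
  have hhub : ∀ x ∈ K i, (inner ℝ u₀ x : ℝ) ≤ supportFn (K i) u₀ :=
    fun x hx => le_csSup hbddim ⟨x, hx, rfl⟩
  have hu₀norm : ‖u₀‖ = 1 := by simpa [mem_sphere_iff_norm] using hu₀
  have hhle : supportFn (K i) u₀ ≤ Metric.hausdorffDist (K i) K₀ := by
    apply csSup_le (hKine.image _)
    rintro y ⟨x, hx, rfl⟩
    obtain ⟨z, hz, hdz⟩ := hcpt.exists_infDist_eq_dist hK₀ne x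
    have h1 : (inner ℝ u₀ z : ℝ) ≤ 0 := hsupp0 z hz
    have h2 : (inner ℝ u₀ (x - z) : ℝ) ≤ ‖u₀‖ * ‖x - z‖ := real_inner_le_norm _ _
    have h3 : (inner ℝ u₀ x : ℝ) = inner ℝ u₀ z + (inner ℝ u₀ (x - z) : ℝ) := by
      rw [inner_sub_right]; ring
    have h4 : Metric.infDist x K₀ ≤ Metric.hausdorffDist (K i) K₀ :=
      Metric.infDist_le_hausdorffDist_of_mem hx hfin
    have h5 : ‖x - z‖ = dist x z := (dist_eq_norm x z).symm
    show (inner ℝ u₀ x : ℝ) ≤ Metric.hausdorffDist (K i) K₀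
    rw [h3]
    calc (inner ℝ u₀ z : ℝ) + (inner ℝ u₀ (x - z) : ℝ)
        ≤ 0 + ‖u₀‖ * ‖x - z‖ := add_le_add h1 h2
      _ = dist x z := by rw [hu₀norm, one_mul, zero_add, h5]
      _ = Metric.infDist x K₀ := hdz.symm
      _ ≤ Metric.hausdorffDist (K i) K₀ := h4
  -- radial function bound
  have hR0 : (0:ℝ) ∈ {r : ℝ | 0 ≤ r ∧ r • v ∈ K i} := ⟨le_refl 0, by simpa using h0Ki⟩
  have hRub : ∀ r ∈ {r : ℝ | 0 ≤ r ∧ r • v ∈ K i}, r ≤ supportFn (K i) u₀ / δ := by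
    rintro r ⟨hr0, hrv⟩
    have h1 : r * δ ≤ r * (inner ℝ v u₀ : ℝ) := mul_le_mul_of_nonneg_left hv2.le hr0
    have h2 : (inner ℝ u₀ (r • v) : ℝ) = r * (inner ℝ v u₀ : ℝ) := by
      rw [real_inner_smul_right, real_inner_comm]
    have h3 := hhub _ hrv
    rw [h2] at h3
    rw [le_div_iff₀ hδ0]
    exact h1.trans h3
  have hρub : radialFn (K i) v ≤ supportFn (K i) u₀ / δ :=
    csSup_le ⟨0, hR0⟩ hRub
  have hρ0 : 0 ≤ radialFn (K i) v :=
    le_csSup ⟨supportFn (K i) u₀ / δ, fun r hr => hRub r hr⟩ hR0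
  have hfinal : radialFn (K i) v < ε := by
    have : supportFn (K i) u₀ / δ < ε := by
      rw [div_lt_iff₀ hδ0]
      calc supportFn (K i) u₀ ≤ Metric.hausdorffDist (K i) K₀ := hhle
        _ < ε * δ := hi
    linarith
  show dist ((0 : Euc n → ℝ) v) (radialFn (K i) v) < ε
  rw [Pi.zero_apply, Real.dist_eq, zero_sub, abs_neg, abs_of_nonneg hρ0]
  exact hfinal
end
end
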